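/- If G is a simple graph with girth at least 5 and U, W are disjoint vertex subsets with |E(U,W)| edges between them, then for any natural number r, the number p(U,W) of 3-vertex paths with middle vertex in U and both endpoints in W satisfies p(U,W) ≥ ((r+1)|U| - |E(U,W)|)·C(r,2) + (|E(U,W)| - r|U|)·C(r+1,2). -/

import Mathlib

private lemma choose2_cast (n : ℕ) : (2 * n.choose 2 : ℤ) = n * (n - 1) := by
  induction n with
  | zero => simp
  | succ n ih =>
    have h : (n + 1).choose 2 = n.choose 2 + n := by
      rw [Nat.choose_succ_succ]
      simp [Nat.choose_one_right, Nat.add_comm]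
    rw [h]
    push_cast
    push_cast at ih
    nlinarith [ih]

private lemma consec_nonneg (x : ℤ) : 0 ≤ x * (x - 1) := by
  rcases le_or_gt x 0 with h | h
  · nlinarith
  · nlinarith

/-- Lemma 2.8 (lower bound): if `U` and `W` are disjoint vertex sets of a
graph of girth ≥ 5, `z = |E(U,W)|`, then for every natural number `r`,
`p(U,W) ≥ ((r+1)|U| - z)·C(r,2) + (z - r|U|)·C(r+1,2)` (over ℤ, since the
right-hand side terms may be negative).  `p(U,W)` counts unordered 3-vertex
paths with middle vertex in `U` and endpoints in `W`; here each such path is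
counted twice, as two ordered paths, so both sides are doubled. -/
theorem stmt5 {V : Type*} [Fintype V] (G : SimpleGraph V) [DecidableRel G.Adj]
    (hg : 5 ≤ G.girth) (U W : Finset V) (hUW : Disjoint U W) (r : ℕ)
    (z : ℕ)
    (hz : z = {p : V × V | p.1 ∈ U ∧ p.2 ∈ W ∧ G.Adj p.1 p.2}.ncard) :
    2 * ((((r : ℤ) + 1) * U.card - z) * Nat.choose r 2
          + ((z : ℤ) - r * U.card) * Nat.choose (r + 1) 2)
      ≤ ({t : V × V × V | t.2.1 ∈ U ∧ t.1 ∈ W ∧ t.2.2 ∈ W ∧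
          G.Adj t.1 t.2.1 ∧ G.Adj t.2.1 t.2.2 ∧ t.1 ≠ t.2.2}.ncard : ℤ) := by
  classical
  set N : V → Finset V := fun u => W.filter (fun w => G.Adj u w) with hN
  set d : V → ℕ := fun u => (N u).card with hd
  -- the edge set as a Finset
  set S : Finset (V × V) := Finset.univ.filter
    (fun p => p.1 ∈ U ∧ p.2 ∈ W ∧ G.Adj p.1 p.2) with hSdef
  have hSset : {p : V × V | p.1 ∈ U ∧ p.2 ∈ W ∧ G.Adj p.1 p.2} = ↑S := by
    ext p; simp [hSdef]
  -- the path set as a Finset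
  set T : Finset (V × V × V) := Finset.univ.filter
    (fun t => t.2.1 ∈ U ∧ t.1 ∈ W ∧ t.2.2 ∈ W ∧
      G.Adj t.1 t.2.1 ∧ G.Adj t.2.1 t.2.2 ∧ t.1 ≠ t.2.2) with hTdef
  have hTset : {t : V × V × V | t.2.1 ∈ U ∧ t.1 ∈ W ∧ t.2.2 ∈ W ∧
      G.Adj t.1 t.2.1 ∧ G.Adj t.2.1 t.2.2 ∧ t.1 ≠ t.2.2} = ↑T := by
    ext t; simp [hTdef]
  -- z is the sum of degrees into W
  have hzS : z = S.card := by rw [hz, hSset, Set.ncard_coe_finset]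
  have hScard : S.card = ∑ u ∈ U, d u := by
    rw [Finset.card_eq_sum_card_fiberwise
      (f := fun p : V × V => p.1) (t := U)
      (fun p hp => by simp only [hSdef, Finset.mem_coe, Finset.mem_filter, Finset.mem_univ,
        true_and] at hp; exact hp.1)]
    refine Finset.sum_congr rfl (fun u hu => ?_)
    have : (S.filter fun p => p.1 = u) = {u} ×ˢ N u := by
      ext ⟨a, b⟩
      simp only [hSdef, hN, Finset.mem_filter, Finset.mem_univ, true_and,
        Finset.mem_product, Finset.mem_singleton]
      constructor
      · rintro ⟨⟨_, hb, hadj⟩, rfl⟩; exact ⟨rfl, hb, hadj⟩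
      · rintro ⟨rfl, hb, hadj⟩; exact ⟨⟨hu, hb, hadj⟩, rfl⟩
    rw [this, Finset.card_product, Finset.card_singleton, one_mul]
  -- T's cardinality fiberwise
  have hTcard : T.card = ∑ u ∈ U, (d u * d u - d u) := by
    rw [Finset.card_eq_sum_card_fiberwise
      (f := fun t : V × V × V => t.2.1) (t := U)
      (fun t ht => by simp only [hTdef, Finset.mem_coe, Finset.mem_filter, Finset.mem_univ,
        true_and] at ht; exact ht.1)]
    refine Finset.sum_congr rfl (fun u hu => ?_)
    have hcb : (T.filter fun t => t.2.1 = u).card = ((N u).offDiag).card := by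
      refine Finset.card_nbij' (fun t => (t.1, t.2.2)) (fun p => (p.1, u, p.2))
        ?_ ?_ ?_ ?_
      · rintro ⟨a, b, c⟩ ht
        simp only [hTdef, Finset.mem_coe, Finset.mem_filter, Finset.mem_univ, true_and] at ht
        obtain ⟨⟨hbU, haW, hcW, hab, hbc, hac⟩, rfl⟩ := ht
        simp only [Finset.mem_coe, Finset.mem_offDiag, hN, Finset.mem_filter]
        exact ⟨⟨haW, hab.symm⟩, ⟨hcW, hbc⟩, hac⟩
      · rintro ⟨a, c⟩ hp
        simp only [Finset.mem_coe, Finset.mem_offDiag, hN, Finset.mem_filter] at hp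
        obtain ⟨⟨haW, hau⟩, ⟨hcW, huc⟩, hac⟩ := hp
        simp only [hTdef, Finset.mem_coe, Finset.mem_filter, Finset.mem_univ, true_and]
        exact ⟨⟨hu, haW, hcW, hau.symm, huc, hac⟩, trivial⟩
      · rintro ⟨a, b, c⟩ ht
        simp only [hTdef, Finset.mem_coe, Finset.mem_filter, Finset.mem_univ, true_and] at ht
        simp [ht.2]
      · rintro ⟨a, c⟩ _; rfl
    rw [hcb, Finset.offDiag_card]
  -- cast the sum to ℤ
  rw [hTset, Set.ncard_coe_finset, hTcard]
  have hcast : ((∑ u ∈ U, (d u * d u - d u) : ℕ) : ℤ)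
      = ∑ u ∈ U, ((d u : ℤ) * d u - d u) := by
    rw [Nat.cast_sum]
    refine Finset.sum_congr rfl (fun u _ => ?_)
    have hle : d u ≤ d u * d u := by
      rcases Nat.eq_zero_or_pos (d u) with h | h
      · simp [h]
      · exact Nat.le_mul_of_pos_left _ h
    push_cast [hle]
    ring
  rw [hcast]
  -- the sum of degrees equals z
  have hdz : (z : ℤ) = ∑ u ∈ U, (d u : ℤ) := by
    rw [hzS, hScard]; push_cast; ring
  -- per-vertex convexity bound
  have hterm : ∀ u ∈ U, (r : ℤ) * (r - 1) + 2 * r * ((d u : ℤ) - r)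
      ≤ (d u : ℤ) * d u - d u := by
    intro u _
    have := consec_nonneg ((d u : ℤ) - r)
    nlinarith [this]
  have hsum : ∑ u ∈ U, ((r : ℤ) * (r - 1) + 2 * r * ((d u : ℤ) - r))
      ≤ ∑ u ∈ U, ((d u : ℤ) * d u - d u) := Finset.sum_le_sum hterm
  have hsumval : ∑ u ∈ U, ((r : ℤ) * (r - 1) + 2 * r * ((d u : ℤ) - r))
      = (U.card : ℤ) * ((r : ℤ) * (r - 1)) + 2 * r * ((z : ℤ) - r * U.card) := by
    rw [Finset.sum_add_distrib, Finset.sum_const, nsmul_eq_mul, ← Finset.mul_sum,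
      Finset.sum_sub_distrib, Finset.sum_const, nsmul_eq_mul, ← hdz]
    ring
  rw [hsumval] at hsum
  -- finish with the choose identities
  have h1 := choose2_cast r
  have h2 := choose2_cast (r + 1)
  push_cast at h2
  have key : 2 * ((((r : ℤ) + 1) * U.card - z) * (r.choose 2)
      + ((z : ℤ) - r * U.card) * ((r + 1).choose 2))
      = (U.card : ℤ) * ((r : ℤ) * (r - 1)) + 2 * r * ((z : ℤ) - r * U.card) := by
    linear_combination (((r : ℤ) + 1) * U.card - z) * h1
      + ((z : ℤ) - r * U.card) * h2
  linarith [hsum, key]
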